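/- Let R be a noetherian local 𝔽_q-algebra with maximal ideal 𝔪. Let h ≥ 1 and m ∈ ℤ, and let b ∈ GL_r(R((z))) satisfy b·σ(b)·σ²(b)⋯σ^{h−1}(b) = z^m·1_r. Suppose there exists b₀ ∈ GL_r(𝔽_q((z))) whose image in GL_r(R((z))) is congruent to b modulo 𝔪 (all coefficients of all entries of the difference lie in 𝔪). Then b equals the image of b₀ in GL_r(R((z))). -/

import Mathlib

noncomputable section

open scoped Classical

namespace HVpaper

variable {A : Type*} [CommRing A]

/-- Coefficientwise `q`-th power map on formal Laurent series (the map `σ` for `q ≠ 0`;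
junk value `0` for `q = 0`). -/
def laurentFrob (q : ℕ) (x : LaurentSeries A) : LaurentSeries A :=
  if hq : q = 0 then 0 else x.map (ZeroHom.mk (fun a : A => a ^ q) (zero_pow hq))

/-- Entrywise `σ` on matrices of Laurent series. -/
def matFrob (q : ℕ) {n : Type*} (M : Matrix n n (LaurentSeries A)) :
    Matrix n n (LaurentSeries A) :=
  M.map (laurentFrob q)

/-- `x` lies in `z^n · A⟦z⟧`, i.e. all coefficients below `n` vanish. -/
def InZPow (n : ℤ) (x : LaurentSeries A) : Prop :=
  ∀ m : ℤ, m < n → x.coeff m = 0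

/-- `x` lies in the subring `A⟦z⟧` of `A((z))`. -/
def InPS (x : LaurentSeries A) : Prop :=
  ∀ m : ℤ, m < 0 → x.coeff m = 0

/-- `u` is a unit of the subring `A⟦z⟧` of `A((z))`. -/
def IsPSUnit (u : LaurentSeries A) : Prop :=
  InPS u ∧ ∃ v : LaurentSeries A, InPS v ∧ u * v = 1

/-- The element `z^n` of `A((z))`. -/
def zPow (n : ℤ) : LaurentSeries A :=
  HahnSeries.single n 1

/-- The coefficientwise map on Laurent series induced by a ring homomorphism. -/
def lmap {B : Type*} [CommRing B] (f : A →+* B) (x : LaurentSeries A) : LaurentSeries B :=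
  x.map f

variable {k : Type*} [Field k]

/-- Membership in the subgroup `I_n` of `GL_r(k⟦z⟧)`:  `g` and its inverse have entries in
`k⟦z⟧`, `g ≡ 1 mod z^n` on the diagonal, the entries above the diagonal lie in `z^n k⟦z⟧` and
those below the diagonal lie in `z^(n+1) k⟦z⟧`.  For `n = 0` this is the standard Iwahori
subgroup. -/
def InIwahori {r : ℕ} (n : ℕ) (g : Matrix (Fin r) (Fin r) (LaurentSeries k)) : Prop :=
  (∀ i j, InPS (g i j)) ∧ IsUnit g ∧ (∀ i j, InPS (g⁻¹ i j)) ∧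
  (∀ i : Fin r, InZPow (n : ℤ) (g i i - 1)) ∧
  (∀ i j : Fin r, i < j → InZPow (n : ℤ) (g i j)) ∧
  (∀ i j : Fin r, j < i → InZPow ((n : ℤ) + 1) (g i j))

/-- The sum of the `i` smallest (i.e. last `i`) entries of the nonincreasing tuple `μ`. -/
def lowSum {r : ℕ} (μ : Fin r → ℤ) (i : ℕ) : ℤ :=
  ∑ j : Fin r, if r ≤ (j : ℕ) + i then μ j else 0

/-- The matrix `M` over `A((z))` is bounded by the dominant cocharacter
`μ = (μ 0 ≥ … ≥ μ (r-1))` of `GL_r`: for each `1 ≤ i ≤ r` every `i×i` minor of `M` lies in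
`z^(μ_{r-i+1}+⋯+μ_r)·A⟦z⟧` and `det M = z^(μ_1+⋯+μ_r)` times a unit of `A⟦z⟧`. -/
def BoundedBy {r : ℕ} (μ : Fin r → ℤ) (M : Matrix (Fin r) (Fin r) (LaurentSeries A)) : Prop :=
  (∀ i : Fin r, ∀ ri ci : Fin ((i : ℕ) + 1) → Fin r,
    InZPow (lowSum μ ((i : ℕ) + 1)) ((M.submatrix ri ci).det)) ∧
  (∃ u : LaurentSeries A, IsPSUnit u ∧ M.det = zPow (∑ j, μ j) * u)


/-- The product `c·σ(c)·σ²(c)⋯σ^(h−1)(c)` of a square matrix of Laurent series. -/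
def sigmaPowProd (q : ℕ) {r : ℕ} (h : ℕ)
    (c : Matrix (Fin r) (Fin r) (LaurentSeries A)) :
    Matrix (Fin r) (Fin r) (LaurentSeries A) :=
  ((List.range h).map fun i => (matFrob q)^[i] c).prod

private lemma pow_pow_fix {S : Type*} [Monoid S] {a : S} {q : ℕ} (ha : a ^ q = a) :
    ∀ k : ℕ, a ^ q ^ k = a
  | 0 => pow_one a
  | k + 1 => by rw [pow_succ, pow_mul, pow_pow_fix ha k, ha]

/-- The ring homomorphism on Laurent series induced by a coefficientwise ring hom. -/
private def coeffHom {A B : Type*} [CommRing A] [CommRing B] (f : A →+* B) :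
    LaurentSeries A →+* LaurentSeries B where
  toFun x := x.map f
  map_one' := by
    ext g
    by_cases hg : g = (0 : ℤ) <;> simp [HahnSeries.coeff_one, hg]
  map_mul' x y := by
    have h := HahnSeries.map_mul (f : A →ₙ+* B) (x := x) (y := y)
    ext g
    exact congrArg (fun z => z.coeff g) h
  map_zero' := by ext g; simp
  map_add' x y := by ext g; simp

@[simp] private lemma coeffHom_coeff {A B : Type*} [CommRing A] [CommRing B] (f : A →+* B)
    (x : LaurentSeries A) (g : ℤ) : (coeffHom f x).coeff g = f (x.coeff g) := rfl

private lemma laurentFrob_coeff {A : Type*} [CommRing A] {q : ℕ} (hq : q ≠ 0)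
    (x : LaurentSeries A) (n : ℤ) : (laurentFrob q x).coeff n = x.coeff n ^ q := by
  rw [laurentFrob, dif_neg hq]; rfl

private lemma laurentFrob_iter_coeff {A : Type*} [CommRing A] {q : ℕ} (hq : q ≠ 0)
    (x : LaurentSeries A) (n : ℤ) :
    ∀ k : ℕ, ((laurentFrob q)^[k] x).coeff n = x.coeff n ^ q ^ k
  | 0 => by simp
  | k + 1 => by
    rw [Function.iterate_succ_apply', laurentFrob_coeff hq,
      laurentFrob_iter_coeff hq x n k, pow_succ, pow_mul]

private lemma matFrob_iter_apply {A : Type*} [CommRing A] {q : ℕ} {r : ℕ}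
    (M : Matrix (Fin r) (Fin r) (LaurentSeries A)) (i j : Fin r) :
    ∀ k : ℕ, ((matFrob q)^[k] M) i j = (laurentFrob q)^[k] (M i j)
  | 0 => rfl
  | k + 1 => by
    rw [Function.iterate_succ_apply', Function.iterate_succ_apply']
    rw [show ((matFrob q) ((matFrob q)^[k] M)) i j
        = laurentFrob q (((matFrob q)^[k] M) i j) from rfl,
      matFrob_iter_apply M i j k]

private lemma matSmul_mul {A : Type*} [CommRing A] {r : ℕ} (z : LaurentSeries A)
    (M N : Matrix (Fin r) (Fin r) (LaurentSeries A)) : (z • M) * N = z • (M * N) := by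
  refine Matrix.ext fun i j => ?_
  rw [Matrix.smul_apply, Matrix.mul_apply, Matrix.mul_apply, smul_eq_mul, Finset.mul_sum]
  exact Finset.sum_congr rfl fun k _ => by rw [Matrix.smul_apply, smul_eq_mul]; ring

private lemma mul_matSmul {A : Type*} [CommRing A] {r : ℕ} (z : LaurentSeries A)
    (M N : Matrix (Fin r) (Fin r) (LaurentSeries A)) : M * (z • N) = z • (M * N) := by
  refine Matrix.ext fun i j => ?_
  rw [Matrix.smul_apply, Matrix.mul_apply, Matrix.mul_apply, smul_eq_mul, Finset.mul_sum]
  exact Finset.sum_congr rfl fun k _ => by rw [Matrix.smul_apply, smul_eq_mul]; ring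

set_option maxHeartbeats 1600000 in
/-- The final descent step in the proof of **Proposition 7.1** for `G = GL_r`:  a local shtuka
over a noetherian local `𝔽_q`-algebra whose `h`-fold `σ`-power equals the central element
`z^m·1` and whose reduction modulo the maximal ideal is defined over `𝔽_q` is itself defined
over `𝔽_q`. -/
theorem descent_to_Fq
    {p : ℕ} [Fact p.Prime] {e : ℕ} (he : 1 ≤ e) {q : ℕ} (hq : q = p ^ e)
    {R : Type*} [CommRing R] [Algebra (GaloisField p e) R]
    [IsNoetherianRing R] [IsLocalRing R]
    {r : ℕ} (hr : 1 ≤ r)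
    (h : ℕ) (hh : 1 ≤ h) (m : ℤ)
    (b : Matrix (Fin r) (Fin r) (LaurentSeries R)) (hb : IsUnit b)
    (hpow : sigmaPowProd q h b =
      (zPow m : LaurentSeries R) • (1 : Matrix (Fin r) (Fin r) (LaurentSeries R)))
    (b₀ : Matrix (Fin r) (Fin r) (LaurentSeries (GaloisField p e))) (hb₀ : IsUnit b₀)
    (hcong : ∀ (i j : Fin r) (n : ℤ),
      ((b - b₀.map (lmap (algebraMap (GaloisField p e) R))) i j).coeff n ∈
        IsLocalRing.maximalIdeal R) :
    b = b₀.map (lmap (algebraMap (GaloisField p e) R)) := by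
  rcases subsingleton_or_nontrivial R with hR | hR
  · ext i j n
    exact Subsingleton.elim _ _
  have hp : p.Prime := Fact.out
  have hq0 : q ≠ 0 := by rw [hq]; exact pow_ne_zero _ hp.pos.ne'
  have hq2 : 2 ≤ q := by
    rw [hq]
    calc 2 ≤ p := hp.two_le
    _ = p ^ 1 := (pow_one p).symm
    _ ≤ p ^ e := Nat.pow_le_pow_right hp.pos he
  haveI : CharP R p :=
    charP_of_injective_algebraMap (algebraMap (GaloisField p e) R).injective p
  haveI : ExpChar R p := .prime hp
  set f := algebraMap (GaloisField p e) R with hf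
  set Φ : LaurentSeries R →+* LaurentSeries R := coeffHom (iterateFrobenius R p e) with hΦ
  have hlf : ∀ x : LaurentSeries R, laurentFrob q x = Φ x := by
    intro x; ext n
    rw [laurentFrob_coeff hq0, hΦ, coeffHom_coeff, iterateFrobenius_def, hq]
  have hmatΦ : ∀ M : Matrix (Fin r) (Fin r) (LaurentSeries R), matFrob q M = Φ.mapMatrix M := by
    intro M; ext i j
    rw [RingHom.mapMatrix_apply, matFrob, Matrix.map_apply, Matrix.map_apply, hlf]
  -- Step 1: b * σ(P) = P * σ^h(b), both equal sigmaPowProd q (h+1) b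
  have hsucc : sigmaPowProd q (h + 1) b = b * matFrob q (sigmaPowProd q h b) := by
    rw [sigmaPowProd, List.range_succ_eq_map, List.map_cons, List.prod_cons,
      Function.iterate_zero_apply, List.map_map]
    congr 1
    rw [sigmaPowProd, hmatΦ, map_list_prod, List.map_map]
    refine congrArg List.prod (List.map_congr_left fun i _ => ?_)
    show (matFrob q)^[i + 1] b = Φ.mapMatrix ((matFrob q)^[i] b)
    rw [Function.iterate_succ_apply', hmatΦ]
  have hsucc' : sigmaPowProd q (h + 1) b = sigmaPowProd q h b * (matFrob q)^[h] b := by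
    rw [sigmaPowProd, List.range_succ, List.map_append, List.prod_append,
      List.map_singleton, List.prod_singleton]
    rfl
  have hkey := hsucc.symm.trans hsucc'
  rw [hpow] at hkey
  have hΦz : Φ (zPow m) = (zPow m : LaurentSeries R) := by
    ext n
    rw [hΦ, coeffHom_coeff, zPow, HahnSeries.coeff_single]
    split <;> simp
  have hz1 : matFrob q ((zPow m : LaurentSeries R) • (1 : Matrix (Fin r) (Fin r) (LaurentSeries R)))
      = (zPow m : LaurentSeries R) • 1 := by
    rw [hmatΦ]
    refine Matrix.ext fun i j => ?_
    simp only [RingHom.mapMatrix_apply, Matrix.map_apply, Matrix.smul_apply, smul_eq_mul,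
      map_mul, hΦz]
    congr 1
    by_cases hij : i = j <;> simp [Matrix.one_apply, hij]
  rw [hz1, mul_matSmul, mul_one, matSmul_mul, one_mul] at hkey
  have hzz : (zPow (-m) : LaurentSeries R) * zPow m = 1 := by
    rw [zPow, zPow, HahnSeries.single_mul_single, neg_add_cancel, one_mul,
      HahnSeries.single_zero_one]
  have hfix : (matFrob q)^[h] b = b := by
    refine Matrix.ext fun i j => ?_
    have h1 := congrArg (fun M : Matrix (Fin r) (Fin r) (LaurentSeries R) => M i j) hkey
    simp only [Matrix.smul_apply, smul_eq_mul] at h1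
    have h2 := congrArg (fun x : LaurentSeries R => (zPow (-m) : LaurentSeries R) * x) h1
    simp only [← mul_assoc, hzz, one_mul] at h2
    exact h2.symm
  have hQfix : ∀ (i j : Fin r) (n : ℤ), (b i j).coeff n ^ q ^ h = (b i j).coeff n := by
    intro i j n
    have h1 : (((matFrob q)^[h] b) i j).coeff n = (b i j).coeff n ^ q ^ h := by
      rw [matFrob_iter_apply, laurentFrob_iter_coeff hq0]
    rw [← h1, hfix]
  have hb0fix : ∀ a₀ : GaloisField p e, a₀ ^ q = a₀ := by
    intro a₀
    haveI : Fintype (GaloisField p e) := Fintype.ofFinite _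
    have hcard : Fintype.card (GaloisField p e) = q := by
      rw [← Nat.card_eq_fintype_card, GaloisField.card p e (Nat.one_le_iff_ne_zero.mp he), hq]
    rw [← hcard]; exact FiniteField.pow_card a₀
  have key : ∀ (i j : Fin r) (n : ℤ),
      (b i j).coeff n = ((b₀.map (lmap f)) i j).coeff n := by
    intro i j n
    set x : R := (b i j).coeff n - ((b₀.map (lmap f)) i j).coeff n with hx
    have hxm : x ∈ IsLocalRing.maximalIdeal R := by
      have hc := hcong i j n
      rw [Matrix.sub_apply, HahnSeries.coeff_sub] at hc
      exact hc
    have ha0 : ((b₀.map (lmap f)) i j).coeff n ^ q = ((b₀.map (lmap f)) i j).coeff n := by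
      have heq : (b₀.map (lmap f)) i j = (b₀ i j).map f := rfl
      have heq2 : ((b₀ i j).map f).coeff n = f ((b₀ i j).coeff n) := rfl
      rw [heq, heq2, ← map_pow, hb0fix]
    have hxq : x ^ q ^ h = x := by
      have hQ : q ^ h = p ^ (e * h) := by rw [hq, ← pow_mul]
      rw [hx, hQ, sub_pow_char_pow, ← hQ, hQfix i j n, pow_pow_fix ha0 h]
    have hQ2 : 2 ≤ q ^ h := le_trans hq2 (Nat.le_self_pow (Nat.one_le_iff_ne_zero.mp hh) q)
    have hmem : ∀ k : ℕ, x ∈ IsLocalRing.maximalIdeal R ^ k := by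
      intro k
      induction k with
      | zero => simpa using Submodule.mem_top
      | succ k ih =>
        have h1 : x ^ (q ^ h - 1) * x ∈
            IsLocalRing.maximalIdeal R ^ k * IsLocalRing.maximalIdeal R :=
          Ideal.mul_mem_mul (Ideal.pow_mem_of_mem _ ih _ (by omega)) hxm
        have h2 : x ^ (q ^ h - 1) * x = x := by
          rw [← pow_succ, Nat.sub_add_cancel (by omega), hxq]
        rw [pow_succ, ← h2]
        exact h1
    have hx0 : x ∈ (⊥ : Ideal R) := by
      rw [← Ideal.iInf_pow_eq_bot_of_isLocalRing (IsLocalRing.maximalIdeal R)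
        (Ideal.IsMaximal.ne_top inferInstance)]
      exact Submodule.mem_iInf _ |>.mpr hmem
    have hx0' : x = 0 := by simpa using hx0
    rw [hx] at hx0'
    exact sub_eq_zero.mp hx0'
  ext i j n
  exact key i j n

end HVpaper
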